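/- arXiv:1101.4420 — 2 statements merged into one kernel-verified Lean document; each statement's English description precedes it below -/
import Mathlib

section
/- There do not exist three unit circles C₁, C₂, C₃ in the plane with distinct centers c₁, c₂, c₃ such that each pair Cᵢ, Cⱼ intersects in two distinct points xᵢⱼ and yᵢⱼ, and for every i, the angular distance (as seen from the center cᵢ) between any intersection point of Cᵢ with Cⱼ and any intersection point of Cᵢ with Cₖ (j ≠ i ≠ k, j ≠ k) is less than π/3. -/
open EuclideanGeometry Metric Real

lemma midreal (x1 x2 y1 y2 a1 a2 b1 b2 : ℝ)
    (h1 : (x1-a1)^2+(x2-a2)^2 = 1) (h2 : (x1-b1)^2+(x2-b2)^2 = 1)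
    (h3 : (y1-a1)^2+(y2-a2)^2 = 1) (h4 : (y1-b1)^2+(y2-b2)^2 = 1)
    (hp : 0 < (x1-y1)^2+(x2-y2)^2) (hq : 0 < (a1-b1)^2+(a2-b2)^2) :
    x1+y1 = a1+b1 ∧ x2+y2 = a2+b2 := by
  have hpq : (x1-y1)*(a1-b1)+(x2-y2)*(a2-b2) = 0 := by linear_combination (-h1+h2+h3-h4)/2
  have hps : (x1-y1)*(x1+y1-a1-b1)+(x2-y2)*(x2+y2-a2-b2) = 0 := by
    linear_combination (h1+h2-h3-h4)/2
  have hqs : (a1-b1)*(x1+y1-a1-b1)+(a2-b2)*(x2+y2-a2-b2) = 0 := by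
    linear_combination (-h1+h2-h3+h4)/2
  have hdet : 0 < ((x1-y1)*(a2-b2)-(x2-y2)*(a1-b1))^2 := by nlinarith [hpq, hp, hq]
  have hd : (x1-y1)*(a2-b2)-(x2-y2)*(a1-b1) ≠ 0 := by
    intro h; rw [h] at hdet; simp at hdet
  have e1 : ((x1-y1)*(a2-b2)-(x2-y2)*(a1-b1)) * (x1+y1-a1-b1) = 0 := by
    linear_combination (a2-b2)*hps - (x2-y2)*hqs
  have e2 : ((x1-y1)*(a2-b2)-(x2-y2)*(a1-b1)) * (x2+y2-a2-b2) = 0 := by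
    linear_combination (x1-y1)*hqs - (a1-b1)*hps
  rcases mul_eq_zero.mp e1 with h | h; · exact absurd h hd
  rcases mul_eq_zero.mp e2 with h' | h'; · exact absurd h' hd
  constructor <;> linarith

lemma dist_sq (z w : ℂ) (h : dist z w = 1) : (z.re-w.re)^2+(z.im-w.im)^2 = 1 := by
  have := congrArg (·^2) h
  rw [Complex.dist_eq_re_im] at this
  simpa [Real.sq_sqrt (by positivity : (0:ℝ) ≤ (z.re-w.re)^2+(z.im-w.im)^2)] using this

lemma mid (a b x y : ℂ) (hab : a ≠ b) (hxy : x ≠ y)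
    (hxa : dist x a = 1) (hxb : dist x b = 1) (hya : dist y a = 1) (hyb : dist y b = 1) :
    x + y = a + b := by
  have hp : 0 < (x.re-y.re)^2+(x.im-y.im)^2 := by
    rcases lt_or_eq_of_le (by positivity : (0:ℝ) ≤ (x.re-y.re)^2+(x.im-y.im)^2) with h | h
    · exact h
    · exfalso; apply hxy; apply Complex.ext <;>
        nlinarith [sq_nonneg (x.re-y.re), sq_nonneg (x.im-y.im)]
  have hq : 0 < (a.re-b.re)^2+(a.im-b.im)^2 := by
    rcases lt_or_eq_of_le (by positivity : (0:ℝ) ≤ (a.re-b.re)^2+(a.im-b.im)^2) with h | h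
    · exact h
    · exfalso; apply hab; apply Complex.ext <;>
        nlinarith [sq_nonneg (a.re-b.re), sq_nonneg (a.im-b.im)]
  obtain ⟨e1, e2⟩ := midreal x.re x.im y.re y.im a.re a.im b.re b.im
    (dist_sq x a hxa) (dist_sq x b hxb) (dist_sq y a hya) (dist_sq y b hyb) hp hq
  apply Complex.ext <;> simp [Complex.add_re, Complex.add_im] <;> linarith

lemma inner_c (z w : ℂ) : (inner ℝ z w : ℝ) = z.re*w.re + z.im*w.im := by
  simp [real_inner_eq_re_inner ℂ, Complex.mul_re]; ring

lemma angle_c (p q r : ℂ) :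
    EuclideanGeometry.angle p q r = InnerProductGeometry.angle (p - q) (r - q) := by
  rw [EuclideanGeometry.angle, vsub_eq_sub, vsub_eq_sub]

lemma inner_gt (u v : ℂ) (h : InnerProductGeometry.angle u v < π/3) (hu : ‖u‖ = 1)
    (hv : ‖v‖ = 1) : (1:ℝ)/2 < inner ℝ u v := by
  have h1 := InnerProductGeometry.cos_angle u v
  rw [hu, hv] at h1
  have h2 : Real.cos (π/3) < Real.cos (InnerProductGeometry.angle u v) :=
    Real.cos_lt_cos_of_nonneg_of_le_pi (InnerProductGeometry.angle_nonneg u v)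
      (by linarith [Real.pi_pos]) h
  rw [Real.cos_pi_div_three, h1] at h2
  rw [inner_c u v]; rw [inner_c u v] at h2; simp at h2 ⊢; linarith

/-- There are no three unit circles with distinct centers, pairwise intersecting in two
distinct points, such that for each `i` the angle at `cᵢ` between any intersection point of
`Cᵢ` with `Cⱼ` and any intersection point of `Cᵢ` with `Cₖ` is less than `π/3`. -/
theorem no_three_close_unit_circles :
    ¬ ∃ (c : Fin 3 → ℂ) (x y : Fin 3 → Fin 3 → ℂ),
      Function.Injective c ∧
      (∀ i j : Fin 3, i ≠ j →
        x i j ≠ y i j ∧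
        sphere (c i) 1 ∩ sphere (c j) 1 = {x i j, y i j}) ∧
      (∀ i j k : Fin 3, j ≠ i → k ≠ i → j ≠ k →
        ∀ p q : ℂ, (p = x i j ∨ p = y i j) → (q = x i k ∨ q = y i k) →
          EuclideanGeometry.angle p (c i) q < π / 3) := by
  rintro ⟨c, x, y, hinj, hint, hang⟩
  -- distances of intersection points to the two centers
  have hmem : ∀ i j : Fin 3, i ≠ j →
      dist (x i j) (c i) = 1 ∧ dist (x i j) (c j) = 1 ∧
      dist (y i j) (c i) = 1 ∧ dist (y i j) (c j) = 1 := by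
    intro i j hij
    obtain ⟨-, hset⟩ := hint i j hij
    have hx : x i j ∈ sphere (c i) 1 ∩ sphere (c j) 1 := by rw [hset]; left; rfl
    have hy : y i j ∈ sphere (c i) 1 ∩ sphere (c j) 1 := by rw [hset]; right; rfl
    exact ⟨hx.1, hx.2, hy.1, hy.2⟩
  -- key: the angle between centers at each center is < π/3
  have key : ∀ i j k : Fin 3, j ≠ i → k ≠ i → j ≠ k →
      EuclideanGeometry.angle (c j) (c i) (c k) < π / 3 := by
    intro i j k hji hki hjk
    obtain ⟨hxi, hxj, hyi, hyj⟩ := hmem i j (Ne.symm hji)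
    obtain ⟨hxi', hxk, hyi', hyk⟩ := hmem i k (Ne.symm hki)
    set u := x i j - c i with hu
    set v := y i j - c i with hv
    set w := x i k - c i with hw
    set z := y i k - c i with hz
    have hnu : ‖u‖ = 1 := by rw [hu, ← dist_eq_norm]; exact hxi
    have hnv : ‖v‖ = 1 := by rw [hv, ← dist_eq_norm]; exact hyi
    have hnw : ‖w‖ = 1 := by rw [hw, ← dist_eq_norm]; exact hxi'
    have hnz : ‖z‖ = 1 := by rw [hz, ← dist_eq_norm]; exact hyi'
    have hGT : ∀ p q : ℂ, (p = x i j ∨ p = y i j) → (q = x i k ∨ q = y i k) →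
        ‖p - c i‖ = 1 → ‖q - c i‖ = 1 → (1:ℝ)/2 < inner ℝ (p - c i) (q - c i) := by
      intro p q hp hq h1 h2
      have := hang i j k hji hki hjk p q hp hq
      rw [angle_c] at this
      exact inner_gt _ _ this h1 h2
    have i1 := hGT (x i j) (x i k) (Or.inl rfl) (Or.inl rfl) hnu hnw
    have i2 := hGT (x i j) (y i k) (Or.inl rfl) (Or.inr rfl) hnu hnz
    have i3 := hGT (y i j) (x i k) (Or.inr rfl) (Or.inl rfl) hnv hnw
    have i4 := hGT (y i j) (y i k) (Or.inr rfl) (Or.inr rfl) hnv hnz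
    -- midpoint facts
    have hcij : c i ≠ c j := fun h => (Ne.symm hji) (hinj h)
    have hcik : c i ≠ c k := fun h => (Ne.symm hki) (hinj h)
    have m1 : x i j + y i j = c i + c j :=
      mid (c i) (c j) (x i j) (y i j) hcij (hint i j (Ne.symm hji)).1 hxi hxj hyi hyj
    have m2 : x i k + y i k = c i + c k :=
      mid (c i) (c k) (x i k) (y i k) hcik (hint i k (Ne.symm hki)).1 hxi' hxk hyi' hyk
    have huv : c j - c i = u + v := by rw [hu, hv]; linear_combination -m1
    have hwz : c k - c i = w + z := by rw [hw, hz]; linear_combination -m2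
    -- inner product of center directions > 2
    have hsum : (2:ℝ) < inner ℝ (c j - c i) (c k - c i) := by
      rw [huv, hwz, inner_add_left, inner_add_right, inner_add_right]
      linarith
    -- norms ≤ 2
    have hn1 : ‖c j - c i‖ ≤ 2 := by
      rw [huv]; calc ‖u + v‖ ≤ ‖u‖ + ‖v‖ := norm_add_le u v
        _ = 2 := by rw [hnu, hnv]; norm_num
    have hn2 : ‖c k - c i‖ ≤ 2 := by
      rw [hwz]; calc ‖w + z‖ ≤ ‖w‖ + ‖z‖ := norm_add_le w z
        _ = 2 := by rw [hnw, hnz]; norm_num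
    have hn1p : 0 < ‖c j - c i‖ := by
      rw [norm_pos_iff, sub_ne_zero]; exact fun h => hcij h.symm
    have hn2p : 0 < ‖c k - c i‖ := by
      rw [norm_pos_iff, sub_ne_zero]; exact fun h => hcik h.symm
    -- cosine of the angle > 1/2
    have hcos : (1:ℝ)/2 < Real.cos (EuclideanGeometry.angle (c j) (c i) (c k)) := by
      rw [angle_c, InnerProductGeometry.cos_angle]
      rw [lt_div_iff₀ (by positivity)]
      nlinarith
    by_contra hcon
    push_neg at hcon
    have : Real.cos (EuclideanGeometry.angle (c j) (c i) (c k)) ≤ Real.cos (π/3) :=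
      Real.cos_le_cos_of_nonneg_of_le_pi (by positivity) (EuclideanGeometry.angle_le_pi _ _ _) hcon
    rw [Real.cos_pi_div_three] at this
    linarith
  have hsum := EuclideanGeometry.angle_add_angle_add_angle_eq_pi
    (p₁ := c 0) (p₂ := c 1) (p₃ := c 2) (hinj.ne (by decide))
  have a1 := key 1 0 2 (by decide) (by decide) (by decide)
  have a2 := key 2 1 0 (by decide) (by decide) (by decide)
  have a3 := key 0 2 1 (by decide) (by decide) (by decide)
  linarith
end

section
/- In the achievement game played on any hypergraph H, the second player does not have a strategy guaranteeing a strong win. (Strategy stealing: if the second player had a strong-win strategy σ, the first player could steal it by making an arbitrary 'ghost' move and thereafter following σ while ignoring the ghost move, yielding a first-player strong win — a contradiction, since both players cannot simultaneously be guaranteed to complete an edge strictly first.) -/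
/-- The set of vertices occupied by Player 1 (who moves at even indices) after move `n`
of the play `p`. -/
def playerOneMoves {V : Type*} (p : ℕ → V) (n : ℕ) : Set V :=
  p '' {k | k ≤ n ∧ Even k}

/-- The set of vertices occupied by Player 2 (who moves at odd indices) after move `n`
of the play `p`. -/
def playerTwoMoves {V : Type*} (p : ℕ → V) (n : ℕ) : Set V :=
  p '' {k | k ≤ n ∧ Odd k}

/-- Player 2 strongly wins the play `p` of the achievement game on the hypergraph with
edge set `E`: at some move `n` Player 2 occupies all of some edge, while Player 1 has not
occupied any edge at any move `m ≤ n`. -/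
def StrongWinTwo {V : Type*} (E : Set (Set V)) (p : ℕ → V) : Prop :=
  ∃ n : ℕ, (∃ e ∈ E, e ⊆ playerTwoMoves p n) ∧
    ∀ m ≤ n, ¬ ∃ e ∈ E, e ⊆ playerOneMoves p m

/-- The play `p` is consistent with the strategy `σ` for Player 2: each odd-indexed move
is given by applying `σ` to the history of previous moves. -/
def ConsistentWithTwo {V : Type*} (σ : List V → V) (p : ℕ → V) : Prop :=
  ∀ k : ℕ, Odd k → p k = σ (List.ofFn fun i : Fin k => p i)

namespace StratSteal

variable {V : Type*} [Infinite V]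

lemma exists_not_mem_list (l : List V) : ∃ v : V, v ∉ l := by
  by_contra h
  push_neg at h
  exact Set.infinite_univ (Set.Finite.subset l.finite_toSet fun x _ => h x)

noncomputable def fresh (l : List V) : V := (exists_not_mem_list l).choose

lemma fresh_not_mem (l : List V) : fresh l ∉ l := (exists_not_mem_list l).choose_spec

variable (σ : List V → V)

open Classical in
noncomputable def step (m : ℕ) (s : List V × List V × V) : List V × List V × V :=
  if m % 2 = 0 then (s.1 ++ [σ s.2.1], s.2.1 ++ [σ s.2.1], s.2.2)
  else if σ s.1 = s.2.2 then (s.1 ++ [σ s.1], s.2.1 ++ [fresh s.2.1], fresh s.2.1)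
  else (s.1 ++ [σ s.1], s.2.1 ++ [σ s.1], s.2.2)

noncomputable def S : ℕ → List V × List V × V
  | 0 => ([], [fresh ([] : List V)], fresh ([] : List V))
  | n + 1 => step σ n (S n)

noncomputable def pp (n : ℕ) : V := (S σ n).2.1.getLastD (fresh [])
noncomputable def qq (m : ℕ) : V := (S σ (m + 1)).1.getLastD (fresh [])
noncomputable def gh (n : ℕ) : V := (S σ n).2.2

lemma exists_concat (n : ℕ) : ∃ a b, (S σ (n+1)).1 = (S σ n).1 ++ [a] ∧
    (S σ (n+1)).2.1 = (S σ n).2.1 ++ [b] := by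
  show ∃ a b, (step σ n (S σ n)).1 = _ ++ [a] ∧ (step σ n (S σ n)).2.1 = _ ++ [b]
  unfold step
  split_ifs <;> exact ⟨_, _, rfl, rfl⟩

lemma Sq_succ (n : ℕ) : (S σ (n+1)).1 = (S σ n).1 ++ [qq σ n] := by
  obtain ⟨a, b, h1, _⟩ := exists_concat σ n
  have : qq σ n = a := by rw [qq, h1, List.getLastD_concat]
  rw [this, h1]

lemma Sp_succ (n : ℕ) : (S σ (n+1)).2.1 = (S σ n).2.1 ++ [pp σ (n+1)] := by
  obtain ⟨a, b, _, h2⟩ := exists_concat σ n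
  have : pp σ (n+1) = b := by rw [pp, h2, List.getLastD_concat]
  rw [this, h2]

lemma even_step {n : ℕ} (h : Even n) :
    qq σ n = σ (S σ n).2.1 ∧ pp σ (n+1) = σ (S σ n).2.1 ∧ gh σ (n+1) = gh σ n := by
  have hS : S σ (n+1) = ((S σ n).1 ++ [σ (S σ n).2.1], (S σ n).2.1 ++ [σ (S σ n).2.1],
      (S σ n).2.2) := by
    show step σ n (S σ n) = _
    unfold step
    rw [if_pos (Nat.even_iff.mp h)]
  refine ⟨?_, ?_, ?_⟩
  · rw [qq, hS, List.getLastD_concat]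
  · rw [pp, hS, List.getLastD_concat]
  · rw [gh, gh, hS]

lemma qq_odd {n : ℕ} (h : Odd n) : qq σ n = σ (S σ n).1 := by
  have hpar : ¬ n % 2 = 0 := by rw [← Nat.even_iff]; exact (Nat.not_even_iff_odd.mpr h)
  rw [qq]
  show ((step σ n (S σ n)).1).getLastD _ = _
  unfold step
  rw [if_neg hpar]
  split_ifs <;> simp [List.getLastD_concat]

lemma odd_col {n : ℕ} (h : Odd n) (hc : σ (S σ n).1 = gh σ n) :
    pp σ (n+1) = fresh (S σ n).2.1 ∧ gh σ (n+1) = fresh (S σ n).2.1 := by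
  have hpar : ¬ n % 2 = 0 := by rw [← Nat.even_iff]; exact (Nat.not_even_iff_odd.mpr h)
  have hS : S σ (n+1) = ((S σ n).1 ++ [σ (S σ n).1], (S σ n).2.1 ++ [fresh (S σ n).2.1],
      fresh (S σ n).2.1) := by
    show step σ n (S σ n) = _
    unfold step
    rw [gh] at hc
    rw [if_neg hpar, if_pos hc]
  constructor
  · rw [pp, hS, List.getLastD_concat]
  · rw [gh, hS]

lemma odd_noncol {n : ℕ} (h : Odd n) (hc : ¬ σ (S σ n).1 = gh σ n) :
    pp σ (n+1) = σ (S σ n).1 ∧ gh σ (n+1) = gh σ n := by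
  have hpar : ¬ n % 2 = 0 := by rw [← Nat.even_iff]; exact (Nat.not_even_iff_odd.mpr h)
  have hS : S σ (n+1) = ((S σ n).1 ++ [σ (S σ n).1], (S σ n).2.1 ++ [σ (S σ n).1],
      (S σ n).2.2) := by
    show step σ n (S σ n) = _
    unfold step
    rw [gh] at hc
    rw [if_neg hpar, if_neg hc]
  constructor
  · rw [pp, hS, List.getLastD_concat]
  · rw [gh, gh, hS]

lemma inv (hσ : ∀ h : List V, h.Nodup → σ h ∉ h) : ∀ n : ℕ,
    (S σ n).2.1.Nodup ∧ (S σ n).1.Nodup ∧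
    (∀ x, x ∈ (S σ n).2.1 ↔ x ∈ (S σ n).1 ∨ x = (S σ n).2.2) ∧
    (S σ n).2.2 ∉ (S σ n).1 := by
  intro n
  induction n with
  | zero => simp [S]
  | succ n ih =>
    obtain ⟨h1, h2, h3, h4⟩ := ih
    have hg_mem : (S σ n).2.2 ∈ (S σ n).2.1 := (h3 _).mpr (Or.inr rfl)
    have hstep : S σ (n+1) = step σ n (S σ n) := rfl
    rw [hstep]
    unfold step
    split_ifs with hpar hc <;> dsimp only
    · -- even
      have hv : σ (S σ n).2.1 ∉ (S σ n).2.1 := hσ _ h1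
      have hvq : σ (S σ n).2.1 ∉ (S σ n).1 := fun h => hv ((h3 _).mpr (Or.inl h))
      have hvg : σ (S σ n).2.1 ≠ (S σ n).2.2 := fun h => hv ((h3 _).mpr (Or.inr h))
      refine ⟨?_, ?_, ?_, ?_⟩
      · simp only [List.nodup_append, List.nodup_singleton, List.disjoint_singleton]
        exact ⟨h1, by trivial, fun a ha b hb hab => hv (by rw [List.mem_singleton] at hb; rw [← hb, ← hab]; exact ha)⟩
      · simp only [List.nodup_append, List.nodup_singleton, List.disjoint_singleton]
        exact ⟨h2, by trivial, fun a ha b hb hab => hvq (by rw [List.mem_singleton] at hb; rw [← hb, ← hab]; exact ha)⟩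
      · intro x
        have := h3 x
        simp only [List.mem_append, List.mem_singleton]
        tauto
      · simp only [List.mem_append, List.mem_singleton]
        push_neg
        exact ⟨h4, fun h => hvg h.symm⟩
    · -- odd, collision
      have hv : σ (S σ n).1 ∉ (S σ n).1 := hσ _ h2
      have hw : fresh (S σ n).2.1 ∉ (S σ n).2.1 := fresh_not_mem _
      have hwq : fresh (S σ n).2.1 ∉ (S σ n).1 := fun h => hw ((h3 _).mpr (Or.inl h))
      have hwg : fresh (S σ n).2.1 ≠ (S σ n).2.2 := fun h => hw ((h3 _).mpr (Or.inr h))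
      refine ⟨?_, ?_, ?_, ?_⟩
      · simp only [List.nodup_append, List.nodup_singleton, List.disjoint_singleton]
        exact ⟨h1, by trivial, fun a ha b hb hab => hw (by rw [List.mem_singleton] at hb; rw [← hb, ← hab]; exact ha)⟩
      · simp only [List.nodup_append, List.nodup_singleton, List.disjoint_singleton]
        exact ⟨h2, by trivial, fun a ha b hb hab => hv (by rw [List.mem_singleton] at hb; rw [← hb, ← hab]; exact ha)⟩
      · intro x
        have := h3 x
        simp only [List.mem_append, List.mem_singleton]
        rw [hc] at *
        tauto
      · simp only [List.mem_append, List.mem_singleton]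
        push_neg
        exact ⟨hwq, fun h => hwg (h.trans hc)⟩
    · -- odd, no collision
      have hv : σ (S σ n).1 ∉ (S σ n).1 := hσ _ h2
      have hvp : σ (S σ n).1 ∉ (S σ n).2.1 := by
        intro h
        rcases (h3 _).mp h with h' | h'
        · exact hv h'
        · exact hc h'
      refine ⟨?_, ?_, ?_, ?_⟩
      · simp only [List.nodup_append, List.nodup_singleton, List.disjoint_singleton]
        exact ⟨h1, by trivial, fun a ha b hb hab => hvp (by rw [List.mem_singleton] at hb; rw [← hb, ← hab]; exact ha)⟩
      · simp only [List.nodup_append, List.nodup_singleton, List.disjoint_singleton]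
        exact ⟨h2, by trivial, fun a ha b hb hab => hv (by rw [List.mem_singleton] at hb; rw [← hb, ← hab]; exact ha)⟩
      · intro x
        have := h3 x
        simp only [List.mem_append, List.mem_singleton]
        tauto
      · simp only [List.mem_append, List.mem_singleton]
        push_neg
        exact ⟨h4, fun h => hc h.symm⟩

lemma plist_eq : ∀ n : ℕ, (S σ n).2.1 = List.ofFn (fun i : Fin (n+1) => pp σ i) := by
  intro n
  induction n with
  | zero =>
    have : pp σ 0 = fresh ([] : List V) := by rw [pp]; rfl
    simp [S, List.ofFn_succ, this]
  | succ n ih =>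
    rw [Sp_succ, ih, List.ofFn_succ' (fun i : Fin (n+2) => pp σ i), List.concat_eq_append]
    congr 1

lemma qlist_eq : ∀ n : ℕ, (S σ n).1 = List.ofFn (fun i : Fin n => qq σ i) := by
  intro n
  induction n with
  | zero => simp [S]
  | succ n ih =>
    rw [Sq_succ, ih, List.ofFn_succ' (fun i : Fin (n+1) => qq σ i), List.concat_eq_append]
    congr 1

lemma pp_inj (hσ : ∀ h : List V, h.Nodup → σ h ∉ h) : Function.Injective (pp σ) := by
  intro a b hab
  have hn := (inv σ hσ (max a b)).1
  rw [plist_eq] at hn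
  have hinj := List.nodup_ofFn.mp hn
  have : (⟨a, by omega⟩ : Fin (max a b + 1)) = ⟨b, by omega⟩ := hinj hab
  simpa using Fin.mk.inj_iff.mp this

lemma qq_inj (hσ : ∀ h : List V, h.Nodup → σ h ∉ h) : Function.Injective (qq σ) := by
  intro a b hab
  have hn := (inv σ hσ (max a b + 1)).2.1
  rw [qlist_eq] at hn
  have hinj := List.nodup_ofFn.mp hn
  have : (⟨a, by omega⟩ : Fin (max a b + 1)) = ⟨b, by omega⟩ := hinj hab
  simpa using Fin.mk.inj_iff.mp this

lemma cons_p : ConsistentWithTwo σ (pp σ) := by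
  intro k hk
  obtain ⟨t, rfl⟩ := hk
  have he : Even (2 * t) := even_two_mul t
  rw [(even_step σ he).2.1, plist_eq]

lemma cons_q : ConsistentWithTwo σ (qq σ) := by
  intro k hk
  rw [qq_odd σ hk, qlist_eq]

lemma qq_even_eq {n : ℕ} (h : Even n) : qq σ n = pp σ (n+1) := by
  rw [(even_step σ h).1, (even_step σ h).2.1]

lemma gh_is_pp : ∀ n : ℕ, ∃ j, j ≤ n ∧ Even j ∧ gh σ n = pp σ j := by
  intro n
  induction n with
  | zero =>
    refine ⟨0, le_refl _, Even.zero, ?_⟩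
    rw [gh, pp]; rfl
  | succ n ih =>
    rcases Nat.even_or_odd n with he | ho
    · obtain ⟨j, hj, hje, hgp⟩ := ih
      exact ⟨j, by omega, hje, by rw [(even_step σ he).2.2]; exact hgp⟩
    · by_cases hc : σ (S σ n).1 = gh σ n
      · refine ⟨n + 1, le_refl _, ho.add_one, ?_⟩
        rw [(odd_col σ ho hc).2, (odd_col σ ho hc).1]
      · obtain ⟨j, hj, hje, hgp⟩ := ih
        exact ⟨j, by omega, hje, by rw [(odd_noncol σ ho hc).2]; exact hgp⟩

lemma qq_odd_cases {n : ℕ} (h : Odd n) :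
    qq σ n = pp σ (n+1) ∨ qq σ n = gh σ n := by
  by_cases hc : σ (S σ n).1 = gh σ n
  · right; rw [qq_odd σ h, hc]
  · left; rw [qq_odd σ h, (odd_noncol σ h hc).1]

end StratSteal

/- Strategy stealing: on any hypergraph, the second player has no strategy guaranteeing
a strong win in the achievement game (plays are injective sequences of vertices, Player 1
moving at even indices; a legal strategy always picks a previously unchosen vertex). -/
open StratSteal in
/-- Strategy stealing: on any hypergraph, the second player has no strategy guaranteeing
a strong win in the achievement game (plays are injective sequences of vertices, Player 1
moving at even indices; a legal strategy always picks a previously unchosen vertex). -/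
theorem no_second_player_strong_win_strategy (V : Type*) [Infinite V] (E : Set (Set V)) :
    ¬ ∃ σ : List V → V, (∀ h : List V, h.Nodup → σ h ∉ h) ∧
      ∀ p : ℕ → V, Function.Injective p → ConsistentWithTwo σ p → StrongWinTwo E p := by
  rintro ⟨σ, hleg, hwin⟩
  obtain ⟨n, ⟨e, he, hsub⟩, hnot⟩ := hwin (pp σ) (pp_inj σ hleg) (cons_p σ)
  obtain ⟨n', ⟨e', he', hsub'⟩, hnot'⟩ := hwin (qq σ) (qq_inj σ hleg) (cons_q σ)
  have hL1 : playerTwoMoves (pp σ) n ⊆ playerOneMoves (qq σ) n := by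
    rintro x ⟨k, ⟨hk, hodd⟩, rfl⟩
    obtain ⟨t, rfl⟩ := hodd
    exact ⟨2 * t, ⟨by omega, even_two_mul t⟩, qq_even_eq σ (even_two_mul t)⟩
  have hL2 : playerTwoMoves (qq σ) n' ⊆ playerOneMoves (pp σ) (n' + 1) := by
    rintro x ⟨k, ⟨hk, hodd⟩, rfl⟩
    rcases qq_odd_cases σ hodd with h | h
    · exact ⟨k + 1, ⟨by omega, hodd.add_one⟩, h.symm⟩
    · obtain ⟨j, hj, hje, hgp⟩ := gh_is_pp σ k
      exact ⟨j, ⟨by omega, hje⟩, by rw [← hgp, ← h]⟩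
  have hgt : n' < n := by
    by_contra hle
    push_neg at hle
    exact hnot' n hle ⟨e, he, hsub.trans hL1⟩
  exact hnot (n' + 1) hgt ⟨e', he', hsub'.trans hL2⟩
end
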